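/- Let k be a nonzero rational number. For every integer n ≥ 0 the element g·hⁿ of Λ_A is a d-cocycle, and for every integer n ≥ 1 the element b·hⁿ − n·k·f·g·h^{n−1} of Λ_A is a d-cocycle; moreover none of these cocycles is a d-coboundary, so each represents a nonzero class in H(Λ_A, d), of degree 4n+3 and 4n+2 respectively. -/

import Mathlib

/-!
Statement 0: In the minimal model `(Λ_A, d)` of `Im Emb_ω(c, μ)` (free graded-commutative
ℚ-algebra on `a, b` of degree 2, `e, f, g` of degree 3, `h` of degree 4, with
`d a = d b = d g = 0`, `d e = a²`, `d f = b²`, `d h = k·b·g` for a nonzero rational `k`),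
the elements `g·hⁿ` (n ≥ 0) and `b·hⁿ − n·k·f·g·h^{n−1}` (n ≥ 1) are `d`-cocycles of degree
`4n+3`, resp. `4n+2`, and none of them is a `d`-coboundary.
-/

/-- The monomial `∏ᵢ ev i ^ p i · ∏ᵢ od i ^ ε i` (odd generators taken in canonical order). -/
def gcMon {A : Type*} [Ring A] {nE nO : ℕ} (ev : Fin nE → A) (od : Fin nO → A) :
    ((Fin nE → ℕ) × (Fin nO → Bool)) → A :=
  fun m => (List.ofFn fun i => ev i ^ m.1 i).prod *
    (List.ofFn fun i => if m.2 i then od i else 1).prod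

/-- The degree of a monomial, given the degrees of the generators. -/
def gcDeg {nE nO : ℕ} (dE : Fin nE → ℕ) (dO : Fin nO → ℕ) :
    ((Fin nE → ℕ) × (Fin nO → Bool)) → ℕ :=
  fun m => (∑ i, dE i * m.1 i) + ∑ i, (if m.2 i then dO i else 0)

/-- The degree-`m` homogeneous component: the span of the monomials of degree `m`. -/
def gcGrade {A : Type*} [Ring A] [Algebra ℚ A] {nE nO : ℕ}
    (ev : Fin nE → A) (od : Fin nO → A) (dE : Fin nE → ℕ) (dO : Fin nO → ℕ) (m : ℕ) :
    Submodule ℚ A :=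
  Submodule.span ℚ (gcMon ev od '' {x | gcDeg dE dO x = m})

/-- `A` is the free graded-commutative ℚ-algebra on even generators `ev` (central) and
odd generators `od` (pairwise anticommuting, squaring to zero): the monomials form a basis. -/
structure IsFreeGCA {A : Type*} [Ring A] [Algebra ℚ A] {nE nO : ℕ}
    (ev : Fin nE → A) (od : Fin nO → A) : Prop where
  li : LinearIndependent ℚ (gcMon ev od)
  spanning : Submodule.span ℚ (Set.range (gcMon ev od)) = ⊤
  central : ∀ i x, Commute (ev i) x
  anticomm : ∀ i j, od i * od j = -(od j * od i)

/-- The grading of `Λ_A`: `a, b` have degree 2, `e, f, g` degree 3 and `h` degree 4. -/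
def gradeLA {A : Type*} [Ring A] [Algebra ℚ A] (a b e f g h : A) : ℕ → Submodule ℚ A :=
  gcGrade ![a, b, h] ![e, f, g] ![2, 2, 4] ![3, 3, 3]

section Aux
set_option linter.unusedSectionVars false
variable {A : Type*} [Ring A] [Algebra ℚ A]

lemma mem_mon {nE nO : ℕ} (ev : Fin nE → A) (od : Fin nO → A) (dE dO) (x) :
    gcMon ev od x ∈ gcGrade ev od dE dO (gcDeg dE dO x) :=
  Submodule.subset_span (Set.mem_image_of_mem _ rfl)

variable (a b e f g h : A)

lemma monval (p : Fin 3 → ℕ) (ε : Fin 3 → Bool) :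
    gcMon ![a,b,h] ![e,f,g] (p, ε) =
      a ^ p 0 * (b ^ p 1 * h ^ p 2) *
        ((if ε 0 then e else 1) * ((if ε 1 then f else 1) * (if ε 2 then g else 1))) := by
  simp [gcMon, List.ofFn_succ, mul_assoc]

lemma degval (p : Fin 3 → ℕ) (ε : Fin 3 → Bool) :
    gcDeg ![2,2,4] ![3,3,3] (p, ε) =
      2 * p 0 + 2 * p 1 + 4 * p 2 +
        ((if ε 0 then 3 else 0) + (if ε 1 then 3 else 0) + (if ε 2 then 3 else 0)) := by
  simp [gcDeg, Fin.sum_univ_three]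

lemma memX (i j l : ℕ) :
    a ^ i * (b ^ j * h ^ l) ∈ gradeLA a b e f g h (2*i + 2*j + 4*l) := by
  have := mem_mon ![a,b,h] ![e,f,g] ![2,2,4] ![3,3,3] (![i,j,l], ![false,false,false])
  rw [monval, degval] at this
  simpa [gradeLA] using this

lemma memOne : (1 : A) ∈ gradeLA a b e f g h 0 := by
  simpa using memX a b e f g h 0 0 0

lemma memApow (i : ℕ) : a ^ i ∈ gradeLA a b e f g h (2*i) := by
  simpa using memX a b e f g h i 0 0

lemma memBpow (j : ℕ) : b ^ j ∈ gradeLA a b e f g h (2*j) := by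
  simpa using memX a b e f g h 0 j 0

lemma memA : a ∈ gradeLA a b e f g h 2 := by simpa using memApow a b e f g h 1
lemma memB : b ∈ gradeLA a b e f g h 2 := by simpa using memBpow a b e f g h 1
lemma memH : h ∈ gradeLA a b e f g h 4 := by simpa using memX a b e f g h 0 0 1

lemma memOdd (α β γ : Bool) :
    (if α then e else 1) * ((if β then f else 1) * (if γ then g else 1)) ∈
      gradeLA a b e f g h ((if α then 3 else 0) + ((if β then 3 else 0) + (if γ then 3 else 0))) := by
  have := mem_mon ![a,b,h] ![e,f,g] ![2,2,4] ![3,3,3] (![0,0,0], ![α,β,γ])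
  rw [monval, degval] at this
  simp only [gradeLA, Matrix.cons_val_zero, Matrix.cons_val_one, Matrix.head_cons,
    Matrix.cons_val_two, Matrix.tail_cons, pow_zero, one_mul, mul_zero, zero_add,
    mul_assoc, add_assoc] at this
  exact this

lemma memE : e ∈ gradeLA a b e f g h 3 := by simpa using memOdd a b e f g h true false false
lemma memF : f ∈ gradeLA a b e f g h 3 := by simpa using memOdd a b e f g h false true false
lemma memG : g ∈ gradeLA a b e f g h 3 := by simpa using memOdd a b e f g h false false true

lemma swapmul : ∀ u v : A, u * v = v * u → ∀ x, u * (v * x) = v * (u * x) := by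
  intro u v huv x; rw [← mul_assoc, huv, mul_assoc]

lemma aswapmul : ∀ u v : A, u * v = -(v * u) → ∀ x, u * (v * x) = -(v * (u * x)) := by
  intro u v huv x; rw [← mul_assoc, huv, neg_mul, mul_assoc]

lemma neg_one_even (i j l : ℕ) : ((-1 : ℚ)) ^ (2*i + 2*j + 4*l) = 1 :=
  Even.neg_one_pow ⟨i + j + 2*l, by ring⟩

end Aux

theorem statement0 {A : Type*} [Ring A] [Algebra ℚ A]
    (a b e f g h : A) (k : ℚ) (hk : k ≠ 0) (d : A →ₗ[ℚ] A)
    (hfree : IsFreeGCA ![a, b, h] ![e, f, g])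
    (hdeg : ∀ (m : ℕ) (x : A), x ∈ gradeLA a b e f g h m → d x ∈ gradeLA a b e f g h (m + 1))
    (hleib : ∀ (m : ℕ) (x y : A), x ∈ gradeLA a b e f g h m →
      d (x * y) = d x * y + ((-1 : ℚ) ^ m) • (x * d y))
    (hda : d a = 0) (hdb : d b = 0) (hdg : d g = 0)
    (hde : d e = a * a) (hdf : d f = b * b) (hdh : d h = k • (b * g)) :
    (∀ n : ℕ,
      d (g * h ^ n) = 0 ∧
      g * h ^ n ∈ gradeLA a b e f g h (4 * n + 3) ∧
      g * h ^ n ∉ LinearMap.range d) ∧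
    (∀ n : ℕ, 1 ≤ n →
      d (b * h ^ n - ((n : ℚ) * k) • (f * (g * h ^ (n - 1)))) = 0 ∧
      b * h ^ n - ((n : ℚ) * k) • (f * (g * h ^ (n - 1))) ∈ gradeLA a b e f g h (4 * n + 2) ∧
      b * h ^ n - ((n : ℚ) * k) • (f * (g * h ^ (n - 1))) ∉ LinearMap.range d) := by
  classical
  have ca : ∀ x : A, Commute a x := fun x => by simpa using hfree.central 0 x
  have cb : ∀ x : A, Commute b x := fun x => by simpa using hfree.central 1 x
  have ch : ∀ x : A, Commute h x := fun x => by simpa using hfree.central 2 x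
  have osq : ∀ x : A, x * x = -(x * x) → x * x = 0 := by
    intro x hx
    have h2 : (2:ℚ) • (x*x) = 0 := by rw [two_smul]; nth_rewrite 1 [hx]; exact neg_add_cancel _
    have := congrArg (fun y => ((2:ℚ)⁻¹) • y) h2
    simpa [smul_smul] using this
  have gg : g * g = 0 := osq g (by simpa using hfree.anticomm 2 2)
  have ge : g * e = -(e * g) := by simpa using hfree.anticomm 2 0
  have gf : g * f = -(f * g) := by simpa using hfree.anticomm 2 1
  have d1 : d (1 : A) = 0 := by
    have := hleib 0 1 1 (memOne a b e f g h)
    simp only [mul_one, pow_zero, one_smul, one_mul] at this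
    exact left_eq_add.mp this
  have dApow : ∀ i, d (a ^ i) = 0 := by
    intro i; induction i with
    | zero => simpa using d1
    | succ n ih =>
      have := hleib 2 a (a ^ n) (memA a b e f g h)
      rw [← pow_succ'] at this
      simp [this, hda, ih]
  have dBpow : ∀ j, d (b ^ j) = 0 := by
    intro j; induction j with
    | zero => simpa using d1
    | succ n ih =>
      have := hleib 2 b (b ^ n) (memB a b e f g h)
      rw [← pow_succ'] at this
      simp [this, hdb, ih]
  have dHpow : ∀ l : ℕ, d (h ^ (l+1)) = (((l:ℚ)+1) * k) • (b * (g * h ^ l)) := by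
    intro l; induction l with
    | zero => simp [hdh]
    | succ n ih =>
      have hl := hleib 4 h (h ^ (n+1)) (memH a b e f g h)
      rw [← pow_succ'] at hl
      rw [hl, hdh, ih]
      have hmv : h * (b * (g * h ^ n)) = b * (g * h ^ (n+1)) := by
        rw [swapmul h b ((ch b).eq) _, swapmul h g ((ch g).eq) _, ← pow_succ']
      rw [mul_smul_comm, hmv, smul_mul_assoc, mul_assoc, smul_smul, ← add_smul]
      congr 1
      push_cast
      ring
  have dGH : ∀ n, d (g * h ^ n) = 0 := by
    intro n
    have h1 := hleib 3 g (h ^ n) (memG a b e f g h)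
    rw [h1, hdg, zero_mul, zero_add]
    cases n with
    | zero => simp [d1]
    | succ m =>
      rw [dHpow m, mul_smul_comm]
      have hz : g * (b * (g * h ^ m)) = 0 := by
        rw [swapmul g b ((cb g).eq.symm) _, ← mul_assoc g g, gg, zero_mul, mul_zero]
      simp [hz]
  have dT2 : ∀ m : ℕ, d (b * h ^ (m+1) - (((m:ℚ)+1) * k) • (f * (g * h ^ m))) = 0 := by
    intro m
    have h1 := hleib 2 b (h ^ (m+1)) (memB a b e f g h)
    have h2 := hleib 3 f (g * h ^ m) (memF a b e f g h)
    rw [map_sub, map_smul, h1, h2, hdb, hdf, dGH m, dHpow m]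
    simp only [zero_mul, zero_add, mul_zero, smul_zero, add_zero]
    norm_num
    rw [show b*(b*(g*h^m)) = b*b*(g*h^m) from (mul_assoc _ _ _).symm, sub_self]
  have memGH : ∀ n : ℕ, g * h ^ n ∈ gradeLA a b e f g h (4*n+3) := by
    intro n
    have := mem_mon ![a,b,h] ![e,f,g] ![2,2,4] ![3,3,3] (![0,0,n], ![false,false,true])
    rw [monval, degval] at this
    simp only [Matrix.cons_val_zero, Matrix.cons_val_one, Matrix.head_cons,
      Matrix.cons_val_two, Matrix.tail_cons, pow_zero, one_mul, mul_one,
      if_false, if_true, Bool.false_eq_true, ite_false, ite_true] at this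
    rw [((ch g).pow_left n).eq] at this
    unfold gradeLA
    convert this using 2
    omega
  have memT2 : ∀ m : ℕ, b * h ^ (m+1) - ((((m+1:ℕ)):ℚ) * k) • (f * (g * h ^ m)) ∈
      gradeLA a b e f g h (4*(m+1)+2) := by
    intro m
    refine sub_mem ?_ (Submodule.smul_mem _ _ ?_)
    · have := mem_mon ![a,b,h] ![e,f,g] ![2,2,4] ![3,3,3] (![0,1,m+1], ![false,false,false])
      rw [monval, degval] at this
      simp only [Matrix.cons_val_zero, Matrix.cons_val_one, Matrix.head_cons,
        Matrix.cons_val_two, Matrix.tail_cons, pow_zero, pow_one, one_mul, mul_one,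
        Bool.false_eq_true, ite_false] at this
      unfold gradeLA
      convert this using 2
      omega
    · have := mem_mon ![a,b,h] ![e,f,g] ![2,2,4] ![3,3,3] (![0,0,m], ![false,true,true])
      rw [monval, degval] at this
      simp only [Matrix.cons_val_zero, Matrix.cons_val_one, Matrix.head_cons,
        Matrix.cons_val_two, Matrix.tail_cons, pow_zero, one_mul, mul_one,
        Bool.false_eq_true, ite_false, ite_true] at this
      have heq : f*(g*h^m) = h^m*(f*g) := by
        rw [← mul_assoc, ← ((ch (f*g)).pow_left m).eq]
      rw [heq]
      unfold gradeLA
      convert this using 2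
      omega
  -- basis machinery
  have hBtop : ⊤ ≤ Submodule.span ℚ (Set.range (gcMon ![a,b,h] ![e,f,g])) := hfree.spanning.ge
  let B : Module.Basis ((Fin 3 → ℕ) × (Fin 3 → Bool)) ℚ A := Module.Basis.mk hfree.li hBtop
  have hB : ∀ y, B y = gcMon ![a,b,h] ![e,f,g] y := fun y => Module.Basis.mk_apply hfree.li hBtop y
  have coordne : ∀ y m₀, y ≠ m₀ → B.coord m₀ (gcMon ![a,b,h] ![e,f,g] y) = 0 := by
    intro y m₀ hy
    rw [← hB, Module.Basis.coord_apply, Module.Basis.repr_self, Finsupp.single_eq_of_ne' hy]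
  have coordself : ∀ m₀, B.coord m₀ (gcMon ![a,b,h] ![e,f,g] m₀) = 1 := by
    intro m₀; rw [← hB, Module.Basis.coord_apply, Module.Basis.repr_self, Finsupp.single_eq_same]
  set S : Set ((Fin 3 → ℕ) × (Fin 3 → Bool)) :=
    {y | 2 ≤ y.1 0 ∨ 2 ≤ y.1 1 ∨ (1 ≤ y.1 1 ∧ y.2 2 = true)} with hSdef
  set W : Submodule ℚ A := Submodule.span ℚ (gcMon ![a,b,h] ![e,f,g] '' S) with hWdef
  have key : ∀ (i j l : ℕ) (α β γ : Bool),
      d (a^i * (b^j * h^l) *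
        ((if α then e else 1) * ((if β then f else 1) * (if γ then g else 1)))) ∈ W := by
    have gsE : ∀ x : A, g * (e * x) = -(e * (g * x)) := fun x => aswapmul g e ge x
    have gsF : ∀ x : A, g * (f * x) = -(f * (g * x)) := fun x => aswapmul g f gf x
    have ggx : ∀ x : A, g * (g * x) = 0 := fun x => by rw [← mul_assoc, gg, zero_mul]
    have dX0 : ∀ i j : ℕ, d (a^i * b^j) = 0 := by
      intro i j
      have hl0 := hleib (2*i) (a^i) (b^j) (memApow a b e f g h i)
      simp [hl0, dApow, dBpow, Even.neg_one_pow (even_two_mul i)]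
    have dXsucc : ∀ i j l : ℕ, d (a^i * (b^j * h^(l+1))) =
        (((l:ℚ)+1)*k) • (a^i * (b^(j+1) * h^l) * g) := by
      intro i j l
      have h1 := hleib (2*i) (a^i) (b^j * h^(l+1)) (memApow a b e f g h i)
      have h2 := hleib (2*j) (b^j) (h^(l+1)) (memBpow a b e f g h j)
      rw [h1, h2, dApow, dBpow, dHpow]
      simp only [zero_mul, zero_add, Even.neg_one_pow (even_two_mul i),
        Even.neg_one_pow (even_two_mul j), one_smul, mul_smul_comm]
      congr 1
      have hw : a^i*(b^(j+1)*h^l)*g = a^i*(b^j*(b*(g*h^l))) := by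
        rw [mul_assoc, mul_assoc, ((ch g).pow_left l).eq, pow_succ, mul_assoc]
      rw [hw]
    have mvA : ∀ (i j l : ℕ), a^i * (b^j * h^l) * a^2 = a^(i+2) * (b^j * h^l) := by
      intro i j l
      rw [mul_assoc, ← ((ca (b^j*h^l)).pow_left 2).eq, ← mul_assoc, ← pow_add]
    have mvB : ∀ (i j l : ℕ), a^i * (b^j * h^l) * b^2 = a^i * (b^(j+2) * h^l) := by
      intro i j l
      rw [mul_assoc, mul_assoc, ← ((cb (h^l)).pow_left 2).eq,
        ← mul_assoc (b^j) (b^2) (h^l), ← pow_add]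
    have memS : ∀ (q : (Fin 3 → ℕ) × (Fin 3 → Bool)), q ∈ S →
        gcMon ![a,b,h] ![e,f,g] q ∈ W :=
      fun q hq => Submodule.subset_span (Set.mem_image_of_mem _ hq)
    intro i j l α β γ
    rw [hleib (2*i+2*j+4*l) _ _ (memX a b e f g h i j l), neg_one_even, one_smul]
    refine add_mem ?_ ?_
    · -- first term : d X * Y
      cases l with
      | zero =>
        rw [pow_zero, mul_one, dX0, zero_mul]
        exact zero_mem _
      | succ l' =>
        rw [dXsucc, smul_mul_assoc]
        refine Submodule.smul_mem _ _ ?_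
        cases γ with
        | true =>
          cases α <;> cases β <;>
            simp [mul_assoc, gsE, gsF, ggx, gg, mul_neg, neg_mul, neg_neg]
        | false =>
          cases α with
          | false =>
            cases β with
            | false =>
              have hmem := memS (![i,j+1,l'], ![false,false,true])
                (Or.inr (Or.inr ⟨by simp, by simp⟩))
              rw [monval] at hmem
              simp only [Matrix.cons_val_zero, Matrix.cons_val_one, Matrix.head_cons,
                Matrix.cons_val_two, Matrix.tail_cons, Bool.false_eq_true, ite_false,
                ite_true, one_mul, mul_one] at hmem
              simpa using hmem
            | true =>
              have hmem := memS (![i,j+1,l'], ![false,true,true])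
                (Or.inr (Or.inr ⟨by simp, by simp⟩))
              rw [monval] at hmem
              simp only [Matrix.cons_val_zero, Matrix.cons_val_one, Matrix.head_cons,
                Matrix.cons_val_two, Matrix.tail_cons, Bool.false_eq_true, ite_false,
                ite_true, one_mul, mul_one] at hmem
              simp only [Bool.false_eq_true, ite_false, ite_true]
              have hx : a^i*(b^(j+1)*h^l')*g*((1:A)*(f*1)) =
                  -(a^i*(b^(j+1)*h^l')*(f*g)) := by
                rw [one_mul, mul_one, mul_assoc, gf, mul_neg]
              rw [hx]
              exact neg_mem hmem
          | true =>
            cases β with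
            | false =>
              have hmem := memS (![i,j+1,l'], ![true,false,true])
                (Or.inr (Or.inr ⟨by simp, by simp⟩))
              rw [monval] at hmem
              simp only [Matrix.cons_val_zero, Matrix.cons_val_one, Matrix.head_cons,
                Matrix.cons_val_two, Matrix.tail_cons, Bool.false_eq_true, ite_false,
                ite_true, one_mul, mul_one] at hmem
              simp only [Bool.false_eq_true, ite_false, ite_true]
              have hx : a^i*(b^(j+1)*h^l')*g*(e*((1:A)*1)) =
                  -(a^i*(b^(j+1)*h^l')*(e*g)) := by
                rw [one_mul, mul_one, mul_assoc, ge, mul_neg]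
              rw [hx]
              exact neg_mem hmem
            | true =>
              have hmem := memS (![i,j+1,l'], ![true,true,true])
                (Or.inr (Or.inr ⟨by simp, by simp⟩))
              rw [monval] at hmem
              simp only [Matrix.cons_val_zero, Matrix.cons_val_one, Matrix.head_cons,
                Matrix.cons_val_two, Matrix.tail_cons, Bool.false_eq_true, ite_false,
                ite_true, one_mul, mul_one] at hmem
              simp only [Bool.false_eq_true, ite_false, ite_true]
              have hx : a^i*(b^(j+1)*h^l')*g*(e*(f*1)) =
                  a^i*(b^(j+1)*h^l')*(e*(f*g)) := by
                rw [mul_one, mul_assoc, gsE, gf]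
                simp [mul_neg, neg_neg]
              rw [hx]
              exact hmem
    · -- second term : X * d Y
      have dfg : d (f * g) = (b*b) * g := by
        have := hleib 3 f g (memF a b e f g h)
        rw [this, hdf, hdg, mul_zero, smul_zero, add_zero]
      cases α with
      | false =>
        cases β with
        | false =>
          cases γ with
          | false =>
            simp only [Bool.false_eq_true, ite_false, one_mul, mul_one]
            rw [d1, mul_zero]; exact zero_mem _
          | true =>
            simp only [Bool.false_eq_true, ite_false, ite_true, one_mul]
            rw [hdg, mul_zero]; exact zero_mem _
        | true =>
          cases γ with
          | false =>
            simp only [Bool.false_eq_true, ite_false, ite_true, one_mul, mul_one]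
            rw [hdf]
            have hmem := memS (![i,j+2,l], ![false,false,false]) (Or.inr (Or.inl (by simp)))
            rw [monval] at hmem
            simp only [Matrix.cons_val_zero, Matrix.cons_val_one, Matrix.head_cons,
              Matrix.cons_val_two, Matrix.tail_cons, Bool.false_eq_true, ite_false,
              one_mul, mul_one] at hmem
            rw [← pow_two, mvB]
            exact hmem
          | true =>
            simp only [Bool.false_eq_true, ite_false, ite_true, one_mul]
            rw [dfg]
            have hmem := memS (![i,j+2,l], ![false,false,true]) (Or.inr (Or.inl (by simp)))
            rw [monval] at hmem
            simp only [Matrix.cons_val_zero, Matrix.cons_val_one, Matrix.head_cons,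
              Matrix.cons_val_two, Matrix.tail_cons, Bool.false_eq_true, ite_false,
              ite_true, one_mul, mul_one] at hmem
            rw [← mul_assoc, ← pow_two, mvB]
            exact hmem
      | true =>
        cases β with
        | false =>
          cases γ with
          | false =>
            simp only [Bool.false_eq_true, ite_false, ite_true, one_mul, mul_one]
            rw [hde]
            have hmem := memS (![i+2,j,l], ![false,false,false]) (Or.inl (by simp))
            rw [monval] at hmem
            simp only [Matrix.cons_val_zero, Matrix.cons_val_one, Matrix.head_cons,
              Matrix.cons_val_two, Matrix.tail_cons, Bool.false_eq_true, ite_false,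
              one_mul, mul_one] at hmem
            rw [← pow_two, mvA]
            exact hmem
          | true =>
            simp only [Bool.false_eq_true, ite_false, ite_true, one_mul]
            have heg : d (e * g) = (a*a) * g := by
              have := hleib 3 e g (memE a b e f g h)
              rw [this, hde, hdg, mul_zero, smul_zero, add_zero]
            rw [heg]
            have hmem := memS (![i+2,j,l], ![false,false,true]) (Or.inl (by simp))
            rw [monval] at hmem
            simp only [Matrix.cons_val_zero, Matrix.cons_val_one, Matrix.head_cons,
              Matrix.cons_val_two, Matrix.tail_cons, Bool.false_eq_true, ite_false,
              ite_true, one_mul, mul_one] at hmem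
            rw [← mul_assoc, ← pow_two, mvA]
            exact hmem
        | true =>
          cases γ with
          | false =>
            simp only [Bool.false_eq_true, ite_false, ite_true, one_mul, mul_one]
            have hef : d (e * f) = (a*a) * f + -(e * (b*b)) := by
              have := hleib 3 e f (memE a b e f g h)
              rw [this, hde, hdf, show ((-1:ℚ))^3 = -1 by norm_num, neg_smul, one_smul]
            rw [hef, mul_add, mul_neg]
            refine add_mem ?_ (neg_mem ?_)
            · have hmem := memS (![i+2,j,l], ![false,true,false]) (Or.inl (by simp))
              rw [monval] at hmem
              simp only [Matrix.cons_val_zero, Matrix.cons_val_one, Matrix.head_cons,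
                Matrix.cons_val_two, Matrix.tail_cons, Bool.false_eq_true, ite_false,
                ite_true, one_mul, mul_one] at hmem
              rw [← mul_assoc, ← pow_two, mvA]
              exact hmem
            · have hmem := memS (![i,j+2,l], ![true,false,false]) (Or.inr (Or.inl (by simp)))
              rw [monval] at hmem
              simp only [Matrix.cons_val_zero, Matrix.cons_val_one, Matrix.head_cons,
                Matrix.cons_val_two, Matrix.tail_cons, Bool.false_eq_true, ite_false,
                ite_true, one_mul, mul_one] at hmem
              rw [← pow_two, ← ((cb e).pow_left 2).eq, ← mul_assoc, mvB]
              exact hmem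
          | true =>
            simp only [ite_true]
            have hete : d (e * (f * g)) = (a*a) * (f*g) + -(e * ((b*b) * g)) := by
              have := hleib 3 e (f * g) (memE a b e f g h)
              rw [this, hde, dfg, show ((-1:ℚ))^3 = -1 by norm_num, neg_smul, one_smul]
            rw [hete, mul_add, mul_neg]
            refine add_mem ?_ (neg_mem ?_)
            · have hmem := memS (![i+2,j,l], ![false,true,true]) (Or.inl (by simp))
              rw [monval] at hmem
              simp only [Matrix.cons_val_zero, Matrix.cons_val_one, Matrix.head_cons,
                Matrix.cons_val_two, Matrix.tail_cons, Bool.false_eq_true, ite_false,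
                ite_true, one_mul, mul_one] at hmem
              rw [← mul_assoc, ← pow_two, mvA]
              exact hmem
            · have hmem := memS (![i,j+2,l], ![true,false,true]) (Or.inr (Or.inl (by simp)))
              rw [monval] at hmem
              simp only [Matrix.cons_val_zero, Matrix.cons_val_one, Matrix.head_cons,
                Matrix.cons_val_two, Matrix.tail_cons, Bool.false_eq_true, ite_false,
                ite_true, one_mul, mul_one] at hmem
              rw [← pow_two, swapmul e (b^2) (((cb e).pow_left 2).eq.symm) g,
                ← mul_assoc, mvB]
              exact hmem
  have hrange : ∀ x : A, d x ∈ W := by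
    intro x
    have hsub : Submodule.span ℚ (Set.range (gcMon ![a,b,h] ![e,f,g])) ≤ W.comap d := by
      rw [Submodule.span_le]
      rintro _ ⟨⟨p, ε⟩, rfl⟩
      have := key (p 0) (p 1) (p 2) (ε 0) (ε 1) (ε 2)
      rw [← monval] at this
      exact this
    exact hsub (by rw [hfree.spanning]; trivial)
  have notcob : ∀ (m₀) (x : A), m₀ ∉ S → B.coord m₀ x ≠ 0 → x ∉ LinearMap.range d := by
    intro m₀ x hm hc hx
    obtain ⟨z, rfl⟩ := hx
    have h2 : W ≤ LinearMap.ker (B.coord m₀) := by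
      rw [hWdef, Submodule.span_le]
      rintro _ ⟨y, hy, rfl⟩
      have hyne : y ≠ m₀ := fun hEq => hm (hEq ▸ hy)
      simpa [LinearMap.mem_ker] using coordne y m₀ hyne
    exact hc (h2 (hrange z))
  have ghEq : ∀ n : ℕ, g * h ^ n = gcMon ![a,b,h] ![e,f,g] (![0,0,n], ![false,false,true]) := by
    intro n
    rw [monval]
    simp only [Matrix.cons_val_zero, Matrix.cons_val_one, Matrix.head_cons,
      Matrix.cons_val_two, Matrix.tail_cons, pow_zero, one_mul, mul_one,
      Bool.false_eq_true, ite_false, ite_true]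
    exact (((ch g).pow_left n).eq).symm
  have bhEq : ∀ m : ℕ, b * h ^ (m+1) = gcMon ![a,b,h] ![e,f,g] (![0,1,m+1], ![false,false,false]) := by
    intro m
    rw [monval]
    simp only [Matrix.cons_val_zero, Matrix.cons_val_one, Matrix.head_cons,
      Matrix.cons_val_two, Matrix.tail_cons, pow_zero, pow_one, one_mul, mul_one,
      Bool.false_eq_true, ite_false]
  have fghEq : ∀ m : ℕ, f * (g * h ^ m) = gcMon ![a,b,h] ![e,f,g] (![0,0,m], ![false,true,true]) := by
    intro m
    rw [monval]
    simp only [Matrix.cons_val_zero, Matrix.cons_val_one, Matrix.head_cons,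
      Matrix.cons_val_two, Matrix.tail_cons, pow_zero, one_mul, mul_one,
      Bool.false_eq_true, ite_false, ite_true]
    rw [← mul_assoc, ← ((ch (f*g)).pow_left m).eq]
  constructor
  · intro n
    refine ⟨dGH n, memGH n, ?_⟩
    refine notcob (![0,0,n], ![false,false,true]) _ ?_ ?_
    · simp [hSdef]
    · rw [ghEq n, coordself]; norm_num
  · intro n hn
    obtain ⟨m, rfl⟩ : ∃ m, n = m + 1 := ⟨n - 1, by omega⟩
    have hsub : m + 1 - 1 = m := by omega
    rw [hsub]
    refine ⟨?_, memT2 m, ?_⟩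
    · have := dT2 m
      convert this using 3
      push_cast
      ring
    · refine notcob (![0,1,m+1], ![false,false,false]) _ ?_ ?_
      · simp [hSdef]
      · rw [bhEq m, fghEq m, map_sub, map_smul, coordself]
        rw [coordne (![0,0,m], ![false,true,true]) (![0,1,m+1], ![false,false,false]) ?_]
        · norm_num
        · intro hEq
          have := congrFun (congrArg Prod.snd hEq) 1
          simp at this
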